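/- Monotonicity of the Parisi recursion in the x-parameters: let g : ℝ^d → ℝ be twice continuously differentiable with bounded gradient and Hessian, fix a positive semidefinite chain 0 = Q^{(0)} ⪯ Q^{(1)} ⪯ … ⪯ Q^{(n+1)} = U in Sym(d), and let 0 < x_k ≤ x'_k ≤ 1 for k = 1,…,n. Define F_{n+1}(y) = F'_{n+1}(y) = g(y); F_k(y) = (1/x_k) log ∫ exp( x_k F_{k+1}(y+z) ) dγ_{Q^{(k+1)} − Q^{(k)}}(z) and F'_k(y) = (1/x'_k) log ∫ exp( x'_k F'_{k+1}(y+z) ) dγ_{Q^{(k+1)} − Q^{(k)}}(z) for k = n,…,1; F_0 = ∫ F_1(z) dγ_{Q^{(1)}}(z) and F'_0 = ∫ F'_1(z) dγ_{Q^{(1)}}(z). Then F_k(y) ≤ F'_k(y) for every k and y; in particular F_0 ≤ F'_0. -/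

import Mathlib

open MeasureTheory ProbabilityTheory Filter Matrix
open scoped Classical

noncomputable section

namespace SKMulti

variable {d : ℕ}

/-- Euclidean dot product on `Fin d → ℝ`. -/
def dotp (x y : Fin d → ℝ) : ℝ := ∑ u, x u * y u

/-- Frobenius (trace) inner product of matrices, `⟨A,B⟩ = tr(Aᵀ B)`. -/
def minner (A B : Matrix (Fin d) (Fin d) ℝ) : ℝ := ∑ u, ∑ v, A u v * B u v

/-- Squared Frobenius norm. -/
def frobSq (A : Matrix (Fin d) (Fin d) ℝ) : ℝ := ∑ u, ∑ v, (A u v) ^ 2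

/-- Frobenius norm. -/
def frobNorm (A : Matrix (Fin d) (Fin d) ℝ) : ℝ := Real.sqrt (frobSq A)

/-- Strict Loewner order: `A ≺ B` iff `B - A` is positive definite. -/
def lLT (A B : Matrix (Fin d) (Fin d) ℝ) : Prop := (B - A).PosDef

/-- Entrywise (Hadamard) square of a matrix. -/
def hadSq (A : Matrix (Fin d) (Fin d) ℝ) : Matrix (Fin d) (Fin d) ℝ := fun u v => (A u v) ^ 2

/-- The standard Gaussian measure on `ℝ^d`. -/
def stdGaussian (d : ℕ) : Measure (Fin d → ℝ) := Measure.pi fun _ => gaussianReal 0 1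

/-- Positive semidefinite square root (junk value `0` off the PSD cone). -/
def matSqrt (S : Matrix (Fin d) (Fin d) ℝ) : Matrix (Fin d) (Fin d) ℝ :=
  if h : S.PosSemidef then
    (h.1.eigenvectorUnitary : Matrix (Fin d) (Fin d) ℝ) *
      diagonal (fun i => Real.sqrt (h.1.eigenvalues i)) *
      (star h.1.eigenvectorUnitary : Matrix (Fin d) (Fin d) ℝ)
  else 0

/-- Centered Gaussian measure on `ℝ^d` with covariance matrix `S` (for `S` PSD):
the image of the standard Gaussian under the linear map `S^{1/2}`. -/
def gaussOf (S : Matrix (Fin d) (Fin d) ℝ) : Measure (Fin d → ℝ) :=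
  (stdGaussian d).map fun z => (matSqrt S).mulVec z

/-- Overlap matrix `R_N(σ,τ)`. -/
def overlap {N : ℕ} (σ τ : Fin N → Fin d → ℝ) : Matrix (Fin d) (Fin d) ℝ :=
  fun u v => (N : ℝ)⁻¹ * ∑ i, σ i u * τ i v

/-- SK Hamiltonian `X_N(σ)` for a disorder realization `g`. -/
def ham {N : ℕ} (g : Fin N → Fin N → ℝ) (σ : Fin N → Fin d → ℝ) : ℝ :=
  (N : ℝ)⁻¹ * ∑ i, ∑ j, g i j * dotp (σ i) (σ j)

/-- Law of the disorder: i.i.d. standard Gaussians `(g_{ij})`. -/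
def disorder (N : ℕ) : Measure (Fin N → Fin N → ℝ) :=
  Measure.pi fun _ => Measure.pi fun _ => gaussianReal 0 1

/-- Local free energy `p_N(𝒱)`. -/
def pN (d : ℕ) (β : ℝ) (μ : Measure (Fin d → ℝ)) (Sset : Set (Fin d → ℝ)) (N : ℕ)
    (V : Set (Matrix (Fin d) (Fin d) ℝ)) (g : Fin N → Fin N → ℝ) : ℝ :=
  (N : ℝ)⁻¹ * Real.log
    (∫ σ in {σ : Fin N → Fin d → ℝ | (∀ i, σ i ∈ Sset) ∧ overlap σ σ ∈ V},
      Real.exp (β * Real.sqrt (N : ℝ) * ham g σ) ∂(Measure.pi fun _ : Fin N => μ))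

/-- Expected (quenched) local free energy `E[p_N(𝒱)]`. -/
def EpN (d : ℕ) (β : ℝ) (μ : Measure (Fin d → ℝ)) (Sset : Set (Fin d → ℝ)) (N : ℕ)
    (V : Set (Matrix (Fin d) (Fin d) ℝ)) : ℝ :=
  ∫ g, pN d β μ Sset N V g ∂(disorder N)

/-- The Parisi recursion: `parisiRec d n x Q g j` is `X_{n+1-j}` (as a function of the
accumulated Gaussian field), with terminal condition `X_{n+1} = g`. -/
def parisiRec (d n : ℕ) (x : ℕ → ℝ) (Q : ℕ → Matrix (Fin d) (Fin d) ℝ)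
    (g : (Fin d → ℝ) → ℝ) : ℕ → (Fin d → ℝ) → ℝ
  | 0 => g
  | j + 1 => fun y =>
      if n - j = 0 then
        ∫ z, parisiRec d n x Q g j (y + z) ∂(gaussOf (Q 1 - Q 0))
      else
        (x (n - j))⁻¹ *
          Real.log (∫ z, Real.exp (x (n - j) * parisiRec d n x Q g j (y + z))
            ∂(gaussOf (Q (n - j + 1) - Q (n - j))))

/-- Terminal condition of the SK Parisi recursion:
`X_{n+1}(y) = log ∫_Σ exp(√2 β ⟨y,σ⟩ + ⟨Λσ,σ⟩) dμ(σ)`. -/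
def terminal (d : ℕ) (β : ℝ) (μ : Measure (Fin d → ℝ)) (Sset : Set (Fin d → ℝ))
    (Λ : Matrix (Fin d) (Fin d) ℝ) (y : Fin d → ℝ) : ℝ :=
  Real.log (∫ σ in Sset, Real.exp (Real.sqrt 2 * β * dotp y σ + dotp (Λ.mulVec σ) σ) ∂μ)

/-- The local Parisi functional `f(x, 𝒬, U, Λ)`. -/
def parisiF (d : ℕ) (β : ℝ) (μ : Measure (Fin d → ℝ)) (Sset : Set (Fin d → ℝ)) (n : ℕ)
    (x : ℕ → ℝ) (Q : ℕ → Matrix (Fin d) (Fin d) ℝ) (U Λ : Matrix (Fin d) (Fin d) ℝ) : ℝ :=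
  - minner Λ U - β ^ 2 / 2 * ∑ k ∈ Finset.Icc 1 n, x k * (frobSq (Q (k + 1)) - frobSq (Q k))
    + parisiRec d n x Q (terminal d β μ Sset Λ) (n + 1) 0

/-- The set `𝒰` of admissible self-overlaps: positive semidefinite symmetric matrices of
operator norm at most `r` (equivalently, `r·1 - U` is also positive semidefinite). -/
def calU (d : ℕ) (r : ℝ) : Set (Matrix (Fin d) (Fin d) ℝ) :=
  {U | U.PosSemidef ∧ (r • (1 : Matrix (Fin d) (Fin d) ℝ) - U).PosSemidef}

/-- Frobenius ball around `U`. -/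
def fball (U : Matrix (Fin d) (Fin d) ℝ) (ε : ℝ) : Set (Matrix (Fin d) (Fin d) ℝ) :=
  {V | frobNorm (V - U) < ε}

end SKMulti

namespace SKMulti


lemma integrable_exp_mul_gaussianReal (b : ℝ) :
    Integrable (fun t : ℝ => Real.exp (b * t)) (gaussianReal 0 1) := by
  rw [gaussianReal_of_var_ne_zero 0 one_ne_zero,
    integrable_withDensity_iff (measurable_gaussianPDF 0 1)
      (ae_of_all _ fun x => ENNReal.ofReal_lt_top)]
  have key : Integrable
      (fun t : ℝ => ((Real.sqrt (2 * Real.pi))⁻¹ * Real.exp (b ^ 2 / 2)) *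
        Real.exp (-(2⁻¹) * (t - b) ^ 2)) volume :=
    ((integrable_exp_neg_mul_sq (by norm_num : (0:ℝ) < 2⁻¹)).comp_sub_right b).const_mul _
  refine key.congr (ae_of_all _ fun t => ?_)
  simp only [gaussianPDF, gaussianPDFReal]
  push_cast
  rw [mul_one, mul_one, ENNReal.toReal_ofReal (by positivity), mul_assoc, ← Real.exp_add,
    mul_comm (Real.exp (b * t)), mul_assoc, ← Real.exp_add]
  congr 1
  rw [Real.exp_eq_exp]
  ring

lemma integrable_exp_mul_abs_gaussianReal (b : ℝ) :
    Integrable (fun t : ℝ => Real.exp (b * |t|)) (gaussianReal 0 1) := by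
  refine ((integrable_exp_mul_gaussianReal b).add (integrable_exp_mul_gaussianReal (-b))).mono
    ((Real.continuous_exp.comp (continuous_const.mul continuous_abs)).aestronglyMeasurable)
    (ae_of_all _ fun t => ?_)
  simp only [Real.norm_eq_abs, abs_of_nonneg (Real.exp_pos _).le]
  have h1 : b * |t| ≤ max (b * t) (-b * t) := by
    rcases abs_cases t with ⟨h, _⟩ | ⟨h, _⟩
    · rw [h]; exact le_max_left _ _
    · rw [h]; calc b * -t = -b * t := by ring
        _ ≤ _ := le_max_right _ _
  calc Real.exp (b * |t|) ≤ max (Real.exp (b * t)) (Real.exp (-b * t)) := by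
        rcases max_cases (b * t) (-b * t) with ⟨h2, _⟩ | ⟨h2, _⟩ <;> rw [h2] at h1 <;>
          [exact le_max_of_le_left (Real.exp_le_exp.2 h1);
           exact le_max_of_le_right (Real.exp_le_exp.2 h1)]
    _ ≤ Real.exp (b * t) + Real.exp (-b * t) :=
        max_le (le_add_of_nonneg_right (Real.exp_pos _).le)
          (le_add_of_nonneg_left (Real.exp_pos _).le)
    _ ≤ |Real.exp (b * t) + Real.exp (-b * t)| := le_abs_self _

lemma aux_integrable_pi_prod (m : ℕ) (f : ℝ → ℝ) (hf : Integrable f (gaussianReal 0 1)) :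
    Integrable (fun z : Fin m → ℝ => ∏ i, f (z i)) (Measure.pi fun _ => gaussianReal 0 1) := by
  induction m with
  | zero => simp only [Finset.univ_eq_empty, Finset.prod_empty]; exact integrable_const 1
  | succ n ih =>
      have h := (measurePreserving_piFinSuccAbove (fun _ : Fin (n+1) => gaussianReal 0 1) 0).symm
      rw [← h.integrable_comp_emb (MeasurableEquiv.measurableEmbedding _)]
      simp_rw [MeasurableEquiv.piFinSuccAbove_symm_apply, Fin.insertNthEquiv, Fin.prod_univ_succ,
        Fin.insertNth_zero]
      simp only [Fin.zero_succAbove, cast_eq, Function.comp_def, Fin.cons_zero, Fin.cons_succ]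
      exact Integrable.mul_prod hf ih

instance : IsProbabilityMeasure (stdGaussian d) := by
  unfold stdGaussian; infer_instance

lemma continuous_mulVec (M : Matrix (Fin d) (Fin d) ℝ) :
    Continuous fun z : Fin d → ℝ => M.mulVec z :=
  (LinearMap.toContinuousLinearMap M.mulVecLin).continuous

instance (S : Matrix (Fin d) (Fin d) ℝ) : IsProbabilityMeasure (gaussOf S) :=
  Measure.isProbabilityMeasure_map (continuous_mulVec _).measurable.aemeasurable

lemma integrable_exp_mul_norm_stdGaussian (b : ℝ) :
    Integrable (fun z : Fin d → ℝ => Real.exp (b * ‖z‖)) (stdGaussian d) := by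
  have hprod := aux_integrable_pi_prod d (fun t => Real.exp (|b| * |t|))
    (integrable_exp_mul_abs_gaussianReal |b|)
  refine hprod.mono
    ((Real.continuous_exp.comp (continuous_const.mul continuous_norm)).aestronglyMeasurable)
    (ae_of_all _ fun z => ?_)
  simp only [Real.norm_eq_abs, abs_of_nonneg (Real.exp_pos _).le]
  have hz : ‖z‖ ≤ ∑ i, |z i| := by
    refine (pi_norm_le_iff_of_nonneg (Finset.sum_nonneg fun i _ => abs_nonneg _)).2 fun i => ?_
    rw [Real.norm_eq_abs]
    exact Finset.single_le_sum (fun j _ => abs_nonneg (z j)) (Finset.mem_univ i)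
  have h1 : b * ‖z‖ ≤ |b| * ∑ i, |z i| :=
    le_trans (mul_le_mul_of_nonneg_right (le_abs_self b) (norm_nonneg z))
      (mul_le_mul_of_nonneg_left hz (abs_nonneg b))
  calc Real.exp (b * ‖z‖) ≤ Real.exp (|b| * ∑ i, |z i|) := Real.exp_le_exp.2 h1
    _ = ∏ i, Real.exp (|b| * |z i|) := by rw [Finset.mul_sum, Real.exp_sum]
    _ ≤ |∏ i, Real.exp (|b| * |z i|)| := le_abs_self _

lemma integrable_exp_mul_norm_gaussOf (S : Matrix (Fin d) (Fin d) ℝ) (b : ℝ) :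
    Integrable (fun z : Fin d → ℝ => Real.exp (b * ‖z‖)) (gaussOf S) := by
  unfold gaussOf
  rw [integrable_map_measure
    ((by fun_prop : Continuous fun z : Fin d → ℝ => Real.exp (b * ‖z‖)).aestronglyMeasurable)
    (continuous_mulVec _).measurable.aemeasurable]
  set T := LinearMap.toContinuousLinearMap (matSqrt S).mulVecLin with hT
  have hTz : ∀ z, (matSqrt S).mulVec z = T z := fun z => rfl
  refine (integrable_exp_mul_norm_stdGaussian (|b| * ‖T‖)).mono
    ((Real.continuous_exp.comp (continuous_const.mul
      (continuous_norm.comp (continuous_mulVec _)))).aestronglyMeasurable)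
    (ae_of_all _ fun z => ?_)
  simp only [Function.comp_def, Real.norm_eq_abs, abs_of_nonneg (Real.exp_pos _).le]
  apply Real.exp_le_exp.2
  calc b * ‖(matSqrt S).mulVec z‖ ≤ |b| * ‖T z‖ := by
        rw [hTz]; exact mul_le_mul_of_nonneg_right (le_abs_self b) (norm_nonneg _)
    _ ≤ |b| * (‖T‖ * ‖z‖) := mul_le_mul_of_nonneg_left (T.le_opNorm z) (abs_nonneg b)
    _ = |b| * ‖T‖ * ‖z‖ := by ring

lemma integrable_norm_gaussOf (S : Matrix (Fin d) (Fin d) ℝ) :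
    Integrable (fun z : Fin d → ℝ => ‖z‖) (gaussOf S) := by
  refine (integrable_exp_mul_norm_gaussOf S 1).mono continuous_norm.aestronglyMeasurable
    (ae_of_all _ fun z => ?_)
  simp only [Real.norm_eq_abs, abs_of_nonneg (norm_nonneg _),
    abs_of_nonneg (Real.exp_pos _).le, one_mul]
  linarith [Real.add_one_le_exp ‖z‖]


/-- One-sided Lipschitz bound (equivalent to the two-sided one). -/
def LipB (K : ℝ) (f : (Fin d → ℝ) → ℝ) : Prop := ∀ y z, f (y + z) ≤ f y + K * ‖z‖

namespace LipB

variable {K : ℝ} {f : (Fin d → ℝ) → ℝ}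

lemma absLe (hf : LipB K f) (y z : Fin d → ℝ) : |f (y + z) - f y| ≤ K * ‖z‖ := by
  rw [_root_.abs_le]
  constructor
  · have h := hf (y + z) (-z)
    rw [add_neg_cancel_right, norm_neg] at h
    linarith
  · have h := hf y z; linarith

lemma continuous (hK : 0 ≤ K) (hf : LipB K f) : Continuous f := by
  refine (LipschitzWith.of_dist_le_mul (K := ⟨K, hK⟩) fun a b => ?_).continuous
  rw [Real.dist_eq, dist_eq_norm]
  have h := hf.absLe b (a - b)
  rwa [add_sub_cancel] at h

lemma integrable_exp (hK : 0 ≤ K) (hf : LipB K f) (S : Matrix (Fin d) (Fin d) ℝ) (c : ℝ)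
    (y : Fin d → ℝ) :
    Integrable (fun z => Real.exp (c * f (y + z))) (gaussOf S) := by
  refine ((integrable_exp_mul_norm_gaussOf S (|c| * K)).const_mul
    (Real.exp (c * f y))).mono ?_ (ae_of_all _ fun z => ?_)
  · have : Continuous f := hf.continuous hK
    exact (Continuous.aestronglyMeasurable (by fun_prop))
  · simp only [Real.norm_eq_abs, abs_of_nonneg (Real.exp_pos _).le]
    rw [abs_of_nonneg (by positivity : (0:ℝ) ≤ Real.exp (c * f y) * Real.exp (|c| * K * ‖z‖)),
      ← Real.exp_add]
    apply Real.exp_le_exp.2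
    have h1 : |f (y + z) - f y| ≤ K * ‖z‖ := hf.absLe y z
    have h2 : c * (f (y + z) - f y) ≤ |c| * (K * ‖z‖) := by
      calc c * (f (y + z) - f y) ≤ |c * (f (y + z) - f y)| := le_abs_self _
        _ = |c| * |f (y + z) - f y| := abs_mul _ _
        _ ≤ |c| * (K * ‖z‖) := mul_le_mul_of_nonneg_left h1 (abs_nonneg c)
    nlinarith [abs_nonneg c]

lemma integrable (hK : 0 ≤ K) (hf : LipB K f) (S : Matrix (Fin d) (Fin d) ℝ)
    (y : Fin d → ℝ) : Integrable (fun z => f (y + z)) (gaussOf S) := by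
  refine (((integrable_norm_gaussOf S).const_mul K).add (integrable_const |f y|)).mono
    ?_ (ae_of_all _ fun z => ?_)
  · have : Continuous f := hf.continuous hK
    exact (Continuous.aestronglyMeasurable (by fun_prop))
  · have h1 := hf.absLe y z
    have h2 : (0:ℝ) ≤ K * ‖z‖ := mul_nonneg hK (norm_nonneg _)
    have h3 : |f (y+z)| ≤ |f y| + K * ‖z‖ := by
      have := abs_sub_abs_le_abs_sub (f (y + z)) (f y)
      linarith
    simp only [Pi.add_apply, Real.norm_eq_abs]
    rw [abs_of_nonneg (add_nonneg h2 (abs_nonneg _))]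
    linarith

end LipB

section Steps

variable {K x : ℝ} {f f' : (Fin d → ℝ) → ℝ} {S : Matrix (Fin d) (Fin d) ℝ}

lemma step_plain_lip (hK : 0 ≤ K) (hf : LipB K f) (S : Matrix (Fin d) (Fin d) ℝ) :
    LipB K (fun y => ∫ z, f (y + z) ∂(gaussOf S)) := by
  intro y w
  have h1 : (∫ z, f (y + w + z) ∂(gaussOf S)) ≤ ∫ z, (f (y + z) + K * ‖w‖) ∂(gaussOf S) := by
    refine integral_mono (hf.integrable hK S (y + w)) ((hf.integrable hK S y).add
      (integrable_const _)) fun z => ?_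
    have h := hf (y + z) w
    rwa [add_right_comm] at h
  rwa [integral_add (hf.integrable hK S y) (integrable_const _), integral_const,
    probReal_univ, one_smul] at h1

lemma step_log_lip (hK : 0 ≤ K) (hx : 0 < x) (hf : LipB K f) (S : Matrix (Fin d) (Fin d) ℝ) :
    LipB K (fun y => x⁻¹ * Real.log (∫ z, Real.exp (x * f (y + z)) ∂(gaussOf S))) := by
  intro y w
  have hi1 := hf.integrable_exp hK S x (y + w)
  have hi2 := hf.integrable_exp hK S x y
  have hpos1 : 0 < ∫ z, Real.exp (x * f (y + w + z)) ∂(gaussOf S) := integral_exp_pos hi1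
  have hpos2 : 0 < ∫ z, Real.exp (x * f (y + z)) ∂(gaussOf S) := integral_exp_pos hi2
  have hle : (∫ z, Real.exp (x * f (y + w + z)) ∂(gaussOf S)) ≤
      Real.exp (x * (K * ‖w‖)) * ∫ z, Real.exp (x * f (y + z)) ∂(gaussOf S) := by
    rw [← integral_const_mul]
    refine integral_mono hi1 (hi2.const_mul _) fun z => ?_
    rw [← Real.exp_add]
    apply Real.exp_le_exp.2
    have h := hf (y + z) w
    rw [add_right_comm] at h
    nlinarith
  have hlog : Real.log (∫ z, Real.exp (x * f (y + w + z)) ∂(gaussOf S)) ≤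
      x * (K * ‖w‖) + Real.log (∫ z, Real.exp (x * f (y + z)) ∂(gaussOf S)) := by
    calc Real.log (∫ z, Real.exp (x * f (y + w + z)) ∂(gaussOf S))
        ≤ Real.log (Real.exp (x * (K * ‖w‖)) * ∫ z, Real.exp (x * f (y + z)) ∂(gaussOf S)) :=
          Real.log_le_log hpos1 hle
      _ = _ := by rw [Real.log_mul (Real.exp_ne_zero _) hpos2.ne', Real.log_exp]
  calc x⁻¹ * Real.log (∫ z, Real.exp (x * f (y + w + z)) ∂(gaussOf S))
      ≤ x⁻¹ * (x * (K * ‖w‖) + Real.log (∫ z, Real.exp (x * f (y + z)) ∂(gaussOf S))) :=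
        mul_le_mul_of_nonneg_left hlog (inv_nonneg.2 hx.le)
    _ = x⁻¹ * Real.log (∫ z, Real.exp (x * f (y + z)) ∂(gaussOf S)) + K * ‖w‖ := by
        field_simp
        ring

lemma step_plain_mono (hK : 0 ≤ K) (hf : LipB K f) (hf' : LipB K f')
    (hle : ∀ y, f y ≤ f' y) (S : Matrix (Fin d) (Fin d) ℝ) (y : Fin d → ℝ) :
    (∫ z, f (y + z) ∂(gaussOf S)) ≤ ∫ z, f' (y + z) ∂(gaussOf S) :=
  integral_mono (hf.integrable hK S y) (hf'.integrable hK S y) fun z => hle _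

lemma step_log_mono (hK : 0 ≤ K) (hx : 0 < x) (hf : LipB K f) (hf' : LipB K f')
    (hle : ∀ y, f y ≤ f' y) (S : Matrix (Fin d) (Fin d) ℝ) (y : Fin d → ℝ) :
    x⁻¹ * Real.log (∫ z, Real.exp (x * f (y + z)) ∂(gaussOf S)) ≤
      x⁻¹ * Real.log (∫ z, Real.exp (x * f' (y + z)) ∂(gaussOf S)) := by
  have hi := hf.integrable_exp hK S x y
  have hi' := hf'.integrable_exp hK S x y
  refine mul_le_mul_of_nonneg_left ?_ (inv_nonneg.2 hx.le)
  refine Real.log_le_log (integral_exp_pos hi) ?_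
  exact integral_mono hi hi' fun z => Real.exp_le_exp.2
    (mul_le_mul_of_nonneg_left (hle _) hx.le)

/-- Monotonicity in the parameter: Hölder/Jensen. -/
lemma step_coef_mono {a b : ℝ} (hK : 0 ≤ K) (ha : 0 < a) (hab : a ≤ b) (hf : LipB K f)
    (S : Matrix (Fin d) (Fin d) ℝ) (y : Fin d → ℝ) :
    a⁻¹ * Real.log (∫ z, Real.exp (a * f (y + z)) ∂(gaussOf S)) ≤
      b⁻¹ * Real.log (∫ z, Real.exp (b * f (y + z)) ∂(gaussOf S)) := by
  rcases eq_or_lt_of_le hab with rfl | hab'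
  · exact le_rfl
  have hb : 0 < b := ha.trans hab'
  set c : ℝ := a / b with hc
  have hc0 : 0 < c := div_pos ha hb
  have hc1 : c < 1 := (div_lt_one hb).2 hab'
  have hia := hf.integrable_exp hK S a y
  have hib := hf.integrable_exp hK S b y
  have hexp : ∀ z : Fin d → ℝ, Real.exp (b * f (y + z)) ^ c = Real.exp (a * f (y + z)) := by
    intro z
    rw [← Real.exp_mul]
    congr 1
    rw [hc]
    field_simp
  have hjensen : (∫ z, Real.exp (b * f (y + z)) ^ c ∂(gaussOf S)) ≤
      (∫ z, Real.exp (b * f (y + z)) ∂(gaussOf S)) ^ c := by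
    refine ConcaveOn.le_map_integral (Real.strictConcaveOn_rpow hc0 hc1).concaveOn
      (Real.continuous_rpow_const hc0.le).continuousOn isClosed_Ici
      (ae_of_all _ fun z => (Real.exp_pos _).le) hib ?_
    simp only [Function.comp_def, hexp]
    exact hia
  rw [show (fun z => Real.exp (b * f (y + z)) ^ c) = fun z => Real.exp (a * f (y + z)) from
    funext hexp] at hjensen
  have hposa : 0 < ∫ z, Real.exp (a * f (y + z)) ∂(gaussOf S) := integral_exp_pos hia
  have hposb : 0 < ∫ z, Real.exp (b * f (y + z)) ∂(gaussOf S) := integral_exp_pos hib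
  have hlog : Real.log (∫ z, Real.exp (a * f (y + z)) ∂(gaussOf S)) ≤
      c * Real.log (∫ z, Real.exp (b * f (y + z)) ∂(gaussOf S)) := by
    calc Real.log (∫ z, Real.exp (a * f (y + z)) ∂(gaussOf S))
        ≤ Real.log ((∫ z, Real.exp (b * f (y + z)) ∂(gaussOf S)) ^ c) :=
          Real.log_le_log hposa hjensen
      _ = c * Real.log (∫ z, Real.exp (b * f (y + z)) ∂(gaussOf S)) := Real.log_rpow hposb c
  calc a⁻¹ * Real.log (∫ z, Real.exp (a * f (y + z)) ∂(gaussOf S))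
      ≤ a⁻¹ * (c * Real.log (∫ z, Real.exp (b * f (y + z)) ∂(gaussOf S))) :=
        mul_le_mul_of_nonneg_left hlog (inv_nonneg.2 ha.le)
    _ = b⁻¹ * Real.log (∫ z, Real.exp (b * f (y + z)) ∂(gaussOf S)) := by
        rw [hc]; field_simp

end Steps

/-- monotonicity of the Parisi recursion in the `x`-parameters: if
`0 < x_k ≤ x'_k ≤ 1` for `k = 1,…,n`, then the recursions built from `x` and `x'` with the
same chain `𝒬` and terminal condition `g` satisfy `F_k(y) ≤ F'_k(y)` for every level `k`
(`F_k = parisiRec … (n+1−k)`); in particular `F₀ ≤ F'₀`. -/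
theorem parisi_recursion_monotone_in_x
    (d n : ℕ) (g : (Fin d → ℝ) → ℝ) (hg : ContDiff ℝ 2 g)
    (hgrad : ∃ K : ℝ, ∀ y, ‖fderiv ℝ g y‖ ≤ K)
    (hHess : ∃ K : ℝ, ∀ y, ‖fderiv ℝ (fderiv ℝ g) y‖ ≤ K)
    (U : Matrix (Fin d) (Fin d) ℝ) (hU : U.PosSemidef)
    (Q : ℕ → Matrix (Fin d) (Fin d) ℝ)
    (hQ0 : Q 0 = 0) (hQU : Q (n + 1) = U)
    (hQpsd : ∀ k ≤ n + 1, (Q k).PosSemidef)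
    (hQmono : ∀ k ≤ n, (Q (k + 1) - Q k).PosSemidef)
    (x x' : ℕ → ℝ)
    (hx : ∀ k, 1 ≤ k → k ≤ n → 0 < x k)
    (hxx' : ∀ k, 1 ≤ k → k ≤ n → x k ≤ x' k)
    (hx' : ∀ k, 1 ≤ k → k ≤ n → x' k ≤ 1) :
    (∀ j ≤ n + 1, ∀ y : Fin d → ℝ,
      parisiRec d n x Q g j y ≤ parisiRec d n x' Q g j y) := by
  obtain ⟨K₀, hK₀⟩ := hgrad
  set K : ℝ := max K₀ 0 with hKdef
  have hK : 0 ≤ K := le_max_right _ _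
  have hgLip : LipB K g := by
    have hdiff : Differentiable ℝ g := hg.differentiable two_ne_zero
    have hlip : LipschitzWith ⟨K, hK⟩ g := by
      refine lipschitzWith_of_nnnorm_fderiv_le hdiff fun x₀ => ?_
      change ‖fderiv ℝ g x₀‖ ≤ K
      exact (hK₀ x₀).trans (le_max_left _ _)
    intro y z
    have hd := hlip.dist_le_mul (y + z) y
    rw [Real.dist_eq, dist_eq_norm, add_sub_cancel_left] at hd
    change |g (y + z) - g y| ≤ K * ‖z‖ at hd
    have h2 := (_root_.abs_le.1 hd).2
    linarith
  have main : ∀ j, j ≤ n + 1 →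
      LipB K (parisiRec d n x Q g j) ∧ LipB K (parisiRec d n x' Q g j) ∧
        ∀ y, parisiRec d n x Q g j y ≤ parisiRec d n x' Q g j y := by
    intro j
    induction j with
    | zero => exact fun _ => ⟨hgLip, hgLip, fun y => le_rfl⟩
    | succ j ih =>
        intro hj
        obtain ⟨h1, h2, h3⟩ := ih (Nat.le_of_succ_le hj)
        by_cases h : n - j = 0
        · have e1 : parisiRec d n x Q g (j+1) =
              fun y => ∫ z, parisiRec d n x Q g j (y + z) ∂(gaussOf (Q 1 - Q 0)) := by
            simp [parisiRec, h]
          have e2 : parisiRec d n x' Q g (j+1) =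
              fun y => ∫ z, parisiRec d n x' Q g j (y + z) ∂(gaussOf (Q 1 - Q 0)) := by
            simp [parisiRec, h]
          refine ⟨?_, ?_, ?_⟩
          · rw [e1]; exact step_plain_lip hK h1 _
          · rw [e2]; exact step_plain_lip hK h2 _
          · intro y; rw [e1, e2]; exact step_plain_mono hK h1 h2 h3 _ y
        · have hk1 : 1 ≤ n - j := Nat.one_le_iff_ne_zero.2 h
          have hkn : n - j ≤ n := Nat.sub_le n j
          have hxpos : 0 < x (n - j) := hx _ hk1 hkn
          have hx'pos : 0 < x' (n - j) := lt_of_lt_of_le hxpos (hxx' _ hk1 hkn)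
          have e1 : parisiRec d n x Q g (j+1) = fun y => (x (n-j))⁻¹ *
              Real.log (∫ z, Real.exp (x (n-j) * parisiRec d n x Q g j (y + z))
                ∂(gaussOf (Q (n-j+1) - Q (n-j)))) := by
            simp [parisiRec, h]
          have e2 : parisiRec d n x' Q g (j+1) = fun y => (x' (n-j))⁻¹ *
              Real.log (∫ z, Real.exp (x' (n-j) * parisiRec d n x' Q g j (y + z))
                ∂(gaussOf (Q (n-j+1) - Q (n-j)))) := by
            simp [parisiRec, h]
          refine ⟨?_, ?_, ?_⟩
          · rw [e1]; exact step_log_lip hK hxpos h1 _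
          · rw [e2]; exact step_log_lip hK hx'pos h2 _
          · intro y
            rw [e1, e2]
            calc (x (n-j))⁻¹ * Real.log (∫ z, Real.exp (x (n-j) * parisiRec d n x Q g j (y + z))
                  ∂(gaussOf (Q (n-j+1) - Q (n-j))))
                ≤ (x (n-j))⁻¹ * Real.log (∫ z, Real.exp (x (n-j) * parisiRec d n x' Q g j (y + z))
                  ∂(gaussOf (Q (n-j+1) - Q (n-j)))) := step_log_mono hK hxpos h1 h2 h3 _ y
              _ ≤ _ := step_coef_mono hK hxpos (hxx' _ hk1 hkn) h2 _ y
  exact fun j hj y => (main j hj).2.2 y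


end SKMulti
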